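/- Let (Q,+) be an NK-loop and let f, g be special endomorphisms of (Q,+). Then the pointwise sum f + g is a special endomorphism of (Q,+), and f + g = g + f. -/

import Mathlib

/- Preamble: NK-loops, written additively.
   A loop is a set with `+`, a neutral element `0`, and unique left/right
   solvability.  An NK-loop is a loop in which every element decomposes as
   `x = u + v = v + u` with `u` in the nucleus and `v` in the Moufang center.
   Every NK-loop is a diassociative Moufang loop, so every element has a
   (uniquely determined) two-sided inverse `-x`, which we include in the
   structure. -/

universe u

section Preamble
variable {Q : Type u}

/-- `a` belongs to the nucleus `N(Q,+)`. -/
def inNucleus [Add Q] (a : Q) : Prop :=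
  ∀ x y : Q, (a + x) + y = a + (x + y) ∧ (x + a) + y = x + (a + y) ∧
    (x + y) + a = x + (y + a)

/-- `a` belongs to the Moufang center `K(Q,+)`. -/
def inMoufangCenter [Add Q] (a : Q) : Prop :=
  ∀ x y : Q, (a + a) + (x + y) = (a + x) + (a + y)

/-- `a` belongs to the center `Z(Q,+) = N(Q,+) ∩ K(Q,+)`. -/
def inCenter [Add Q] (a : Q) : Prop := inNucleus a ∧ inMoufangCenter a

/-- An NK-loop `(Q,+)`: a loop in which every element decomposes as a sum
    `x = u + v = v + u` with `u ∈ N(Q,+)` and `v ∈ K(Q,+)`. -/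
class NKLoop (Q : Type u) extends Add Q, Zero Q, Neg Q where
  zero_add : ∀ x : Q, 0 + x = x
  add_zero : ∀ x : Q, x + 0 = x
  exu_left : ∀ a b : Q, ∃! x : Q, a + x = b
  exu_right : ∀ a b : Q, ∃! y : Q, y + a = b
  neg_add_cancel : ∀ x : Q, -x + x = 0
  add_neg_cancel : ∀ x : Q, x + -x = 0
  nk_decomp : ∀ x : Q, ∃ u v : Q, inNucleus u ∧ inMoufangCenter v ∧
      x = u + v ∧ x = v + u

variable [Add Q] [Zero Q] [Neg Q]

/-- Natural multiple `n • x`. -/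
def nsmulL : ℕ → Q → Q
  | 0, _ => 0
  | n + 1, x => x + nsmulL n x

/-- Integer multiple `m • x` (unambiguous by diassociativity). -/
def zsmulL : ℤ → Q → Q
  | Int.ofNat n, x => nsmulL n x
  | Int.negSucc n, x => -(nsmulL (n + 1) x)

/-- `f` is an endomorphism of `(Q,+)`. -/
def IsEndo (f : Q → Q) : Prop := ∀ x y : Q, f (x + y) = f x + f y

/-- `a` belongs to the center of the (commutative) subloop `(K(Q,+),+)`:
    `a ∈ K(Q,+)` and `a` satisfies the nucleus conditions relative to
    elements of `K(Q,+)`. -/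
def inCenterOfK (a : Q) : Prop :=
  inMoufangCenter a ∧ ∀ x y : Q, inMoufangCenter x → inMoufangCenter y →
    (a + x) + y = a + (x + y) ∧ (x + a) + y = x + (a + y) ∧
      (x + y) + a = x + (y + a)

/-- `f` is a special endomorphism of the NK-loop `(Q,+)`:
    `f(Q) ⊆ K(Q,+)`, the restriction of `f` to `K(Q,+)` is a quasicentral
    endomorphism of the (commutative) loop `(K(Q,+),+)`, and
    `f(N(Q,+)) ⊆ N(Q,+)`. -/
def IsSpecial (f : Q → Q) : Prop :=
  IsEndo f ∧ (∀ x : Q, inMoufangCenter (f x)) ∧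
  (∃ m : ℤ, ∀ x : Q, inMoufangCenter x → inCenterOfK (zsmulL m x + f x)) ∧
  (∀ x : Q, inNucleus x → inNucleus (f x))

/-- `f` satisfies condition (F): `-x + f(x) ∈ K(Q,+)` and
    `x + f(x) ∈ N(Q,+)` for all `x`. -/
def SatisfiesF (f : Q → Q) : Prop :=
  ∀ x : Q, inMoufangCenter (-x + f x) ∧ inNucleus (x + f x)

end Preamble

namespace NKL
variable {Q : Type u} [NKLoop Q]

lemma za (x : Q) : 0 + x = x := NKLoop.zero_add x
lemma az (x : Q) : x + 0 = x := NKLoop.add_zero x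
lemma nac (x : Q) : -x + x = 0 := NKLoop.neg_add_cancel x
lemma anc (x : Q) : x + -x = 0 := NKLoop.add_neg_cancel x

lemma lcan {a x y : Q} (h : a + x = a + y) : x = y :=
  (NKLoop.exu_left a (a + y)).unique h rfl

lemma lsurj (a t : Q) : ∃ x : Q, a + x = t := (NKLoop.exu_left a t).exists

lemma neg_zeroQ : -(0:Q) = 0 := by have := nac (0:Q); rwa [az] at this

lemma neg_negQ (x : Q) : -(-x) = x :=
  (NKLoop.exu_left (-x) 0).unique (anc (-x)) (nac x)

section Kelem
variable {a : Q} (ha : inMoufangCenter a)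
include ha

lemma dag (s t : Q) : (a+s)+(a+t) = (a+a)+(s+t) := (ha s t).symm

lemma L2 (t : Q) : (a+a)+t = a+(a+t) := by
  have := ha 0 t; rwa [za, az] at this

lemma K_comm (x : Q) : a + x = x + a := by
  obtain ⟨x', hx'⟩ := lsurj a x
  rw [← hx']
  have h1 : (a + x') + (a + 0) = (a+a)+(x'+0) := dag ha x' 0
  rw [az, az] at h1
  rw [h1, L2 ha]

lemma lip (t : Q) : a + (-a + t) = t := by
  have h := dag ha (-a) t
  rw [anc, za, L2 ha] at h
  exact (lcan h).symm

lemma rip (t : Q) : -a + (a + t) = t := lcan (by rw [lip ha])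

lemma A_of_C {n : ℕ} (hC : ∀ t : Q, nsmulL n a + (a + t) = a + (nsmulL n a + t)) :
    ∀ t : Q, (a + nsmulL n a) + t = a + (nsmulL n a + t) := by
  intro t
  obtain ⟨t', ht'⟩ := lsurj a t
  rw [← ht']
  calc (a + nsmulL n a) + (a + t') = (a+a) + (nsmulL n a + t') := dag ha _ _
    _ = a + (a + (nsmulL n a + t')) := L2 ha _
    _ = a + (nsmulL n a + (a + t')) := by rw [hC t']

lemma Cn : ∀ (n : ℕ) (t : Q), nsmulL n a + (a + t) = a + (nsmulL n a + t) := by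
  intro n
  induction n with
  | zero => intro t; show (0:Q) + (a+t) = a + ((0:Q)+t); rw [za, za]
  | succ n ih =>
    intro t
    show (a + nsmulL n a) + (a + t) = a + ((a + nsmulL n a) + t)
    rw [A_of_C ha ih (a+t), ih t, A_of_C ha ih t]

lemma An (n : ℕ) (t : Q) : nsmulL (n+1) a + t = a + (nsmulL n a + t) :=
  A_of_C ha (Cn ha n) t

lemma nadd (p q : ℕ) (t : Q) : nsmulL (p+q) a + t = nsmulL p a + (nsmulL q a + t) := by
  induction p with
  | zero =>
    rw [Nat.zero_add]
    show nsmulL q a + t = (0:Q) + (nsmulL q a + t)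
    rw [za]
  | succ p ih =>
    rw [Nat.succ_add]
    rw [An ha (p+q) t, ih, ← An ha p (nsmulL q a + t)]

lemma dbl (k : ℕ) (s t : Q) :
    (nsmulL k a + s) + (nsmulL k a + t) = nsmulL (k+k) a + (s+t) := by
  induction k generalizing s t with
  | zero =>
    show ((0:Q)+s) + ((0:Q)+t) = (0:Q) + (s+t)
    rw [za, za, za]
  | succ k ih =>
    have e : (k+1)+(k+1) = ((k+k)+1)+1 := by omega
    rw [An ha k s, An ha k t, dag ha (nsmulL k a + s) (nsmulL k a + t), ih s t, e,
      An ha ((k+k)+1) (s+t), An ha (k+k) (s+t), L2 ha]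

lemma nmem (k : ℕ) : inMoufangCenter (nsmulL k a) := by
  intro x y
  have h1 : nsmulL k a + nsmulL k a = nsmulL (k+k) a := by
    have h := nadd ha k k 0
    rw [az, az] at h
    exact h.symm
  rw [h1]
  exact (dbl ha k x y).symm


end Kelem

lemma K_two {b : Q} (hb : inMoufangCenter b) : inMoufangCenter (b+b) := by
  have h := nmem hb 2
  have e : nsmulL 2 b = b + b := by show b + (b + 0) = b + b; rw [az]
  rwa [e] at h

lemma neg_two {b : Q} (hb : inMoufangCenter b) : -b + -b = -(b+b) := by
  have h1 : (b+b) + (-b + -b) = 0 := by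
    rw [L2 hb, lip hb (-b), anc]
  exact (NKLoop.exu_left (b+b) 0).unique h1 (anc (b+b))

lemma K_neg_mem {b : Q} (hb : inMoufangCenter b) : inMoufangCenter (-b) := by
  intro x y
  apply lcan (a := b+b)
  rw [neg_two hb, lip (K_two hb), ← dag hb (-b+x) (-b+y), lip hb, lip hb]

section Zsmul
variable {a : Q} (ha : inMoufangCenter a)
include ha

lemma zmem (j : ℤ) : inMoufangCenter (zsmulL j a) := by
  cases j with
  | ofNat n => exact nmem ha n
  | negSucc n => exact K_neg_mem (nmem ha (n+1))

omit ha in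
lemma zsneg (j : ℤ) : zsmulL (-j) a = -(zsmulL j a) := by
  cases j with
  | ofNat n =>
    cases n with
    | zero =>
      show (0:Q) = -(0:Q)
      rw [neg_zeroQ]
    | succ n => rfl
  | negSucc n =>
    show nsmulL (n+1) a = -(-(nsmulL (n+1) a))
    rw [neg_negQ]

lemma zsucc (j : ℤ) (t : Q) : zsmulL (j+1) a + t = a + (zsmulL j a + t) := by
  cases j with
  | ofNat n =>
    have e : (Int.ofNat n) + 1 = Int.ofNat (n+1) := rfl
    rw [e]
    exact An ha n t
  | negSucc n =>
    cases n with
    | zero =>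
      have e : Int.negSucc 0 + 1 = 0 := rfl
      rw [e]
      show (0:Q) + t = a + (-(nsmulL 1 a) + t)
      have e2 : nsmulL 1 a = a := az a
      rw [e2, za, lip ha]
    | succ n =>
      have e : Int.negSucc (n+1) + 1 = Int.negSucc n := rfl
      rw [e]
      show -(nsmulL (n+1) a) + t = a + (-(nsmulL (n+1+1) a) + t)
      have hM : inMoufangCenter (nsmulL (n+1) a) := nmem ha (n+1)
      have hM2 : inMoufangCenter (nsmulL (n+1+1) a) := nmem ha (n+1+1)
      apply lcan (a := nsmulL (n+1) a)
      rw [lip hM, Cn ha (n+1)]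
      apply lcan (a := a)
      rw [← An ha (n+1) ((-(nsmulL (n+1+1) a)) + t), lip hM2]

lemma zpred (j : ℤ) (t : Q) : zsmulL (j-1) a + t = -a + (zsmulL j a + t) := by
  apply lcan (a := a)
  rw [lip ha]
  have h := zsucc ha (j-1) t
  have e : (j-1)+1 = j := by omega
  rw [e] at h
  exact h.symm

lemma zadd (j k : ℤ) (t : Q) :
    zsmulL (j+k) a + t = zsmulL j a + (zsmulL k a + t) := by
  induction j using Int.induction_on with
  | zero =>
    rw [Int.zero_add]
    show zsmulL k a + t = (0:Q) + (zsmulL k a + t)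
    rw [za]
  | succ i ih =>
    have e : ((i:ℤ)+1)+k = ((i:ℤ)+k)+1 := by ring
    rw [e, zsucc ha ((i:ℤ)+k) t, ih, ← zsucc ha (i:ℤ) (zsmulL k a + t)]
  | pred i ih =>
    have e : (-(i:ℤ)-1)+k = (-(i:ℤ)+k)-1 := by ring
    rw [e, zpred ha (-(i:ℤ)+k) t, ih, ← zpred ha (-(i:ℤ)) (zsmulL k a + t)]

lemma zaddE (j k : ℤ) : zsmulL (j+k) a = zsmulL j a + zsmulL k a := by
  have h := zadd ha j k 0
  rwa [az, az] at h

omit ha in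
lemma zzero : zsmulL (0:ℤ) a = (0:Q) := rfl

end Zsmul

section OLsec
variable {a : Q} (ha : inMoufangCenter a)
include ha

lemma OLe (b t : Q) : (a + b) + t = (a+a) + (b + (-a + t)) := by
  obtain ⟨t', ht'⟩ := lsurj a t
  rw [← ht', rip ha]
  exact dag ha b t'

end OLsec

lemma K_add_mem {b c : Q} (hb : inMoufangCenter b) (hc : inMoufangCenter c) :
    inMoufangCenter (b + c) := by
  intro x y
  have hbb : inMoufangCenter (b+b) := K_two hb
  have s1 : (b+c)+(b+c) = (b+b) + (c + c) := by
    rw [OLe hb c (b+c), rip hb]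
  rw [s1, OLe hb c x, OLe hb c y, dag hbb, dag hc, ← K_neg_mem hb x y, neg_two hb,
    OLe hbb (c+c) (x+y)]

lemma MM {v w : Q} (hv : inMoufangCenter v) (hw : inMoufangCenter w) (i j k l : ℤ) :
    (zsmulL i v + zsmulL j w) + (zsmulL k v + zsmulL l w)
      = zsmulL (i+k) v + zsmulL (j+l) w := by
  calc (zsmulL i v + zsmulL j w) + (zsmulL k v + zsmulL l w)
      = (zsmulL i v + zsmulL i v) + (zsmulL j w + (-(zsmulL i v) + (zsmulL k v + zsmulL l w))) :=
        OLe (zmem hv i) _ _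
    _ = (zsmulL i v + zsmulL i v) + (zsmulL j w + (zsmulL (-i) v + (zsmulL k v + zsmulL l w))) := by
        rw [zsneg]
    _ = (zsmulL i v + zsmulL i v) + (zsmulL j w + (zsmulL (-i+k) v + zsmulL l w)) := by
        rw [← zadd hv (-i) k (zsmulL l w)]
    _ = (zsmulL i v + zsmulL i v) + (zsmulL j w + (zsmulL l w + zsmulL (-i+k) v)) := by
        rw [K_comm (zmem hv (-i+k)) (zsmulL l w)]
    _ = (zsmulL i v + zsmulL i v) + (zsmulL (j+l) w + zsmulL (-i+k) v) := by
        rw [← zadd hw j l (zsmulL (-i+k) v)]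
    _ = (zsmulL i v + zsmulL i v) + (zsmulL (-i+k) v + zsmulL (j+l) w) := by
        rw [K_comm (zmem hw (j+l)) (zsmulL (-i+k) v)]
    _ = zsmulL (i+i) v + (zsmulL (-i+k) v + zsmulL (j+l) w) := by
        rw [zaddE hv i i]
    _ = zsmulL ((i+i) + (-i+k)) v + zsmulL (j+l) w := (zadd hv (i+i) (-i+k) _).symm
    _ = zsmulL (i+k) v + zsmulL (j+l) w := by rw [show (i+i)+(-i+k) = i+k by ring]

lemma nuc1 {c : Q} (hcN : inNucleus c) (s t : Q) : (c+s)+t = c+(s+t) := (hcN s t).1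
lemma nuc2 {c : Q} (hcN : inNucleus c) (s t : Q) : (s+c)+t = s+(c+t) := (hcN s t).2.1
lemma nuc3 {c : Q} (hcN : inNucleus c) (s t : Q) : (s+t)+c = s+(t+c) := (hcN s t).2.2

lemma zc2 {c : Q} (hcN : inNucleus c) (hcK : inMoufangCenter c) (s t : Q) :
    s + (c+t) = c + (s+t) := by
  rw [K_comm hcK t, ← nuc3 hcN s t, ← K_comm hcK (s+t)]

lemma zswap {c d : Q} (hcN : inNucleus c) (hcK : inMoufangCenter c)
    (hdN : inNucleus d) (s : Q) : c + (d + s) = d + (c + s) := by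
  rw [← nuc1 hcN d s, K_comm hcK d, nuc1 hdN c s]

section CK
variable {z : Q} (hz : inCenterOfK z)
include hz

lemma ck1 {p q : Q} (hp : inMoufangCenter p) (hq : inMoufangCenter q) :
    (z+p)+q = z+(p+q) := (hz.2 p q hp hq).1
lemma ck2 {p q : Q} (hp : inMoufangCenter p) (hq : inMoufangCenter q) :
    (p+z)+q = p+(z+q) := (hz.2 p q hp hq).2.1
lemma ck3 {p q : Q} (hp : inMoufangCenter p) (hq : inMoufangCenter q) :
    (p+q)+z = p+(q+z) := (hz.2 p q hp hq).2.2

lemma cke1 {p q : Q} (hp : inMoufangCenter p) (hq : inMoufangCenter q) :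
    (p+z)+q = z+(p+q) := by
  rw [← K_comm hz.1 p]
  exact ck1 hz hp hq

lemma cke2 {p q : Q} (hp : inMoufangCenter p) (hq : inMoufangCenter q) :
    p+(z+q) = z+(p+q) := by
  rw [K_comm hz.1 q, ← ck3 hz hp hq, ← K_comm hz.1 (p+q)]

lemma cke3 {p q : Q} (hp : inMoufangCenter p) (hq : inMoufangCenter q) :
    p+(q+z) = z+(p+q) := by
  rw [← ck3 hz hp hq, ← K_comm hz.1 (p+q)]

lemma ckswap {w s : Q} (hw : inCenterOfK w) (hs : inMoufangCenter s) :
    z + (w + s) = w + (z + s) := by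
  rw [← ck1 hz hw.1 hs, K_comm hz.1 w, ck1 hw hz.1 hs]

end CK

lemma CK_add {w z : Q} (hw : inCenterOfK w) (hz : inCenterOfK z) :
    inCenterOfK (w + z) := by
  refine ⟨K_add_mem hw.1 hz.1, fun p q hp hq => ⟨?_, ?_, ?_⟩⟩
  · rw [ck1 hw hz.1 hp, ck1 hw (K_add_mem hz.1 hp) hq, ck1 hz hp hq,
      ← ck1 hw hz.1 (K_add_mem hp hq)]
  · have h1 : p+(w+z) = (p+w)+z := (ck3 hz hp hw.1).symm
    rw [h1, ck2 hz (K_add_mem hp hw.1) hq, ck2 hw hp (K_add_mem hz.1 hq),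
      ← ck1 hw hz.1 hq]
  · rw [← ck3 hz (K_add_mem hp hq) hw.1, ck3 hw hp hq,
      ck3 hz hp (K_add_mem hq hw.1), ck3 hz hq hw.1]

lemma N_add_mem {b c : Q} (hb : inNucleus b) (hc : inNucleus c) :
    inNucleus (b+c) := by
  intro x y
  refine ⟨?_, ?_, ?_⟩
  · rw [(hb c x).1, (hb (c+x) y).1, (hc x y).1, ← (hb c (x+y)).1]
  · rw [← (hb x c).2.1, (hc (x+b) y).2.1, (hb x (c+y)).2.1, (hb c y).1]
  · rw [← (hc (x+y) b).2.2, (hb x y).2.2, (hc x (y+b)).2.2, (hc y b).2.2]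

lemma inv_form {v A : Q} (hv : inMoufangCenter v) (m : ℤ) :
    A = zsmulL (-m) v + (zsmulL m v + A) := by
  rw [← zadd hv (-m) m A, show (-m+m : ℤ) = 0 by ring, zzero, za]

lemma medial_core {v w A B C D : Q} (hv : inMoufangCenter v) (hw : inMoufangCenter w)
    (m n : ℤ)
    (hz1 : inCenterOfK (zsmulL m v + A)) (hz2 : inCenterOfK (zsmulL m w + B))
    (hw1 : inCenterOfK (zsmulL n v + C)) (hw2 : inCenterOfK (zsmulL n w + D)) :
    (A+B)+(C+D) = (A+C)+(B+D) := by
  obtain ⟨z1, hz1c, hA⟩ : ∃ z, inCenterOfK z ∧ A = zsmulL (-m) v + z :=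
    ⟨_, hz1, inv_form hv m⟩
  obtain ⟨z2, hz2c, hB⟩ : ∃ z, inCenterOfK z ∧ B = zsmulL (-m) w + z :=
    ⟨_, hz2, inv_form hw m⟩
  obtain ⟨w1, hw1c, hC⟩ : ∃ z, inCenterOfK z ∧ C = zsmulL (-n) v + z :=
    ⟨_, hw1, inv_form hv n⟩
  obtain ⟨w2, hw2c, hD⟩ : ∃ z, inCenterOfK z ∧ D = zsmulL (-n) w + z :=
    ⟨_, hw2, inv_form hw n⟩
  rw [hA, hB, hC, hD]
  have hα : inMoufangCenter (zsmulL (-m) v) := zmem hv (-m)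
  have hβ : inMoufangCenter (zsmulL (-m) w) := zmem hw (-m)
  have hα' : inMoufangCenter (zsmulL (-n) v) := zmem hv (-n)
  have hβ' : inMoufangCenter (zsmulL (-n) w) := zmem hw (-n)
  have hz1K := hz1c.1
  have hz2K := hz2c.1
  have hw1K := hw1c.1
  have hw2K := hw2c.1
  have e1 : (zsmulL (-m) v + z1) + (zsmulL (-m) w + z2)
      = z2 + (z1 + (zsmulL (-m) v + zsmulL (-m) w)) := by
    rw [cke3 hz2c (K_add_mem hα hz1K) hβ, cke1 hz1c hα hβ]
  have e2 : (zsmulL (-n) v + w1) + (zsmulL (-n) w + w2)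
      = w2 + (w1 + (zsmulL (-n) v + zsmulL (-n) w)) := by
    rw [cke3 hw2c (K_add_mem hα' hw1K) hβ', cke1 hw1c hα' hβ']
  have e3 : (zsmulL (-m) v + z1) + (zsmulL (-n) v + w1)
      = w1 + (z1 + (zsmulL (-m) v + zsmulL (-n) v)) := by
    rw [cke3 hw1c (K_add_mem hα hz1K) hα', cke1 hz1c hα hα']
  have e4 : (zsmulL (-m) w + z2) + (zsmulL (-n) w + w2)
      = w2 + (z2 + (zsmulL (-m) w + zsmulL (-n) w)) := by
    rw [cke3 hw2c (K_add_mem hβ hz2K) hβ', cke1 hz2c hβ hβ']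
  rw [e1, e2, e3, e4]
  have hαβ : inMoufangCenter (zsmulL (-m) v + zsmulL (-m) w) := K_add_mem hα hβ
  have hα'β' : inMoufangCenter (zsmulL (-n) v + zsmulL (-n) w) := K_add_mem hα' hβ'
  have hαα' : inMoufangCenter (zsmulL (-m) v + zsmulL (-n) v) := K_add_mem hα hα'
  have hββ' : inMoufangCenter (zsmulL (-m) w + zsmulL (-n) w) := K_add_mem hβ hβ'
  have hQ : inMoufangCenter (w2 + (w1 + (zsmulL (-n) v + zsmulL (-n) w))) :=
    K_add_mem hw2K (K_add_mem hw1K hα'β')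
  have hQ' : inMoufangCenter (w2 + (z2 + (zsmulL (-m) w + zsmulL (-n) w))) :=
    K_add_mem hw2K (K_add_mem hz2K hββ')
  rw [ck1 hz2c (K_add_mem hz1K hαβ) hQ, ck1 hz1c hαβ hQ,
    cke2 hw2c hαβ (K_add_mem hw1K hα'β'), cke2 hw1c hαβ hα'β']
  rw [ck1 hw1c (K_add_mem hz1K hαα') hQ', ck1 hz1c hαα' hQ',
    cke2 hw2c hαα' (K_add_mem hz2K hββ'), cke2 hz2c hαα' hββ']
  have c1 : (zsmulL (-m) v + zsmulL (-m) w) + (zsmulL (-n) v + zsmulL (-n) w)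
      = zsmulL (-m + -n) v + zsmulL (-m + -n) w := MM hv hw (-m) (-m) (-n) (-n)
  have c2 : (zsmulL (-m) v + zsmulL (-n) v) + (zsmulL (-m) w + zsmulL (-n) w)
      = zsmulL (-m + -n) v + zsmulL (-m + -n) w := by
    rw [← zaddE hv (-m) (-n), ← zaddE hw (-m) (-n)]
  rw [c1, c2]
  have hE : inMoufangCenter (zsmulL (-m + -n) v + zsmulL (-m + -n) w) :=
    K_add_mem (zmem hv _) (zmem hw _)
  rw [ckswap hw2c hw1c hE,
    ckswap hz1c hw1c (K_add_mem hw2K hE),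
    ckswap hz2c hw1c (K_add_mem hz1K (K_add_mem hw2K hE)),
    ckswap hz2c hz1c (K_add_mem hw2K hE),
    ckswap hz2c hw2c hE]

lemma qc_core {x A B : Q} (hx : inMoufangCenter x) (m n : ℤ)
    (hza : inCenterOfK (zsmulL m x + A)) (hwa : inCenterOfK (zsmulL n x + B)) :
    inCenterOfK (zsmulL (m+n) x + (A + B)) := by
  obtain ⟨z, hzc, hA⟩ : ∃ z, inCenterOfK z ∧ A = zsmulL (-m) x + z :=
    ⟨_, hza, inv_form hx m⟩
  obtain ⟨w, hwc, hB⟩ : ∃ z, inCenterOfK z ∧ B = zsmulL (-n) x + z :=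
    ⟨_, hwa, inv_form hx n⟩
  have hα : inMoufangCenter (zsmulL (-m) x) := zmem hx (-m)
  have hβ : inMoufangCenter (zsmulL (-n) x) := zmem hx (-n)
  have E1 : zsmulL (m+n) x + (A + B) = w + z := by
    rw [hA, hB, cke3 hwc (K_add_mem hα hzc.1) hβ, cke1 hzc hα hβ,
      ← zaddE hx (-m) (-n),
      cke2 hwc (zmem hx (m+n)) (K_add_mem hzc.1 (zmem hx (-m + -n))),
      cke2 hzc (zmem hx (m+n)) (zmem hx (-m + -n)),
      ← zaddE hx (m+n) (-m + -n),
      show (m+n)+(-m + -n) = (0:ℤ) by ring, zzero, az]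
  rw [E1]
  exact CK_add hwc hzc

end NKL

/- STATEMENT 7: Lemma 3.1(2).  The pointwise sum of two special
   endomorphisms of an NK-loop is special, and `f + g = g + f`. -/
theorem special_add {Q : Type u} [NKLoop Q] (f g : Q → Q)
    (hf : IsSpecial f) (hg : IsSpecial g) :
    IsSpecial (fun x : Q => f x + g x) ∧
    ((fun x : Q => f x + g x) = (fun x : Q => g x + f x)) := by
  obtain ⟨hfE, hfK, ⟨m, hfq⟩, hfN⟩ := hf
  obtain ⟨hgE, hgK, ⟨n, hgq⟩, hgN⟩ := hg
  have hcomm : (fun x : Q => f x + g x) = (fun x : Q => g x + f x) := by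
    funext x
    exact NKL.K_comm (hfK x) (g x)
  refine ⟨⟨?_, ?_, ?_, ?_⟩, hcomm⟩
  · intro x y
    show f (x+y) + g (x+y) = (f x + g x) + (f y + g y)
    obtain ⟨u, v, hu, hv, hx1, -⟩ := NKLoop.nk_decomp x
    obtain ⟨u', v', hu', hv', hy1, -⟩ := NKLoop.nk_decomp y
    have cfuN : inNucleus (f u) := hfN u hu
    have cfuK : inMoufangCenter (f u) := hfK u
    have cfu'N : inNucleus (f u') := hfN u' hu'
    have cfu'K : inMoufangCenter (f u') := hfK u'
    have cguN : inNucleus (g u) := hgN u hu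
    have cguK : inMoufangCenter (g u) := hgK u
    have cgu'N : inNucleus (g u') := hgN u' hu'
    have cgu'K : inMoufangCenter (g u') := hgK u'
    rw [hfE x y, hgE x y, hx1, hy1, hfE u v, hfE u' v', hgE u v, hgE u' v']
    have hL : ((f u + f v)+(f u' + f v')) + ((g u + g v)+(g u' + g v'))
        = f u + (f u' + (g u + (g u' + ((f v + f v') + (g v + g v'))))) := by
      rw [NKL.nuc1 cfuN (f v) (f u' + f v'),
        NKL.zc2 cfu'N cfu'K (f v) (f v'),
        NKL.nuc1 cguN (g v) (g u' + g v'),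
        NKL.zc2 cgu'N cgu'K (g v) (g v'),
        NKL.nuc1 cfuN (f u' + (f v + f v')) (g u + (g u' + (g v + g v'))),
        NKL.nuc1 cfu'N (f v + f v') (g u + (g u' + (g v + g v'))),
        NKL.zc2 cguN cguK (f v + f v') (g u' + (g v + g v')),
        NKL.zc2 cgu'N cgu'K (f v + f v') (g v + g v')]
    have hR : ((f u + f v)+(g u + g v)) + ((f u' + f v')+(g u' + g v'))
        = f u + (f u' + (g u + (g u' + ((f v + g v) + (f v' + g v'))))) := by
      rw [NKL.nuc1 cfuN (f v) (g u + g v),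
        NKL.zc2 cguN cguK (f v) (g v),
        NKL.nuc1 cfu'N (f v') (g u' + g v'),
        NKL.zc2 cgu'N cgu'K (f v') (g v'),
        NKL.nuc1 cfuN (g u + (f v + g v)) (f u' + (g u' + (f v' + g v'))),
        NKL.nuc1 cguN (f v + g v) (f u' + (g u' + (f v' + g v'))),
        NKL.zc2 cfu'N cfu'K (f v + g v) (g u' + (f v' + g v')),
        NKL.zc2 cgu'N cgu'K (f v + g v) (f v' + g v'),
        NKL.zswap cguN cguK cfu'N (g u' + ((f v + g v) + (f v' + g v')))]
    have core : (f v + f v') + (g v + g v') = (f v + g v) + (f v' + g v') :=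
      NKL.medial_core hv hv' m n (hfq v hv) (hfq v' hv') (hgq v hv) (hgq v' hv')
    rw [hL, hR, core]
  · intro x
    exact NKL.K_add_mem (hfK x) (hgK x)
  · exact ⟨m+n, fun x hx => NKL.qc_core hx m n (hfq x hx) (hgq x hx)⟩
  · intro x hx
    exact NKL.N_add_mem (hfN x hx) (hgN x hx)
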